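/- For the standard normal CDF Φ and any μ > 0, the tail ratio Φ̄(t - μ)/Φ̄(t) → ∞ as t → ∞, where Φ̄ = 1 - Φ. Hence the Gaussian noise-addition mechanism does not have bounded relative disclosure risk. -/

import Mathlib

open Set Filter Real

/-- The standard normal cumulative distribution function. -/
noncomputable def stdNormalCDF (t : ℝ) : ℝ :=
  ∫ x in Set.Iic t, (Real.sqrt (2 * Real.pi))⁻¹ * Real.exp (-(x ^ 2) / 2)

namespace GaussTailAux

open MeasureTheory

noncomputable def c : ℝ := (Real.sqrt (2 * Real.pi))⁻¹

noncomputable def f (x : ℝ) : ℝ := c * Real.exp (-(x ^ 2) / 2)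

lemma c_pos : 0 < c := inv_pos.2 (Real.sqrt_pos.2 (by positivity))

lemma f_pos (x : ℝ) : 0 < f x := mul_pos c_pos (Real.exp_pos _)

lemma f_eq : f = fun x => c * Real.exp (-(1/2 : ℝ) * x ^ 2) := by
  funext x; unfold f; ring_nf

lemma integrable_f : Integrable f := by
  rw [f_eq]
  exact (integrable_exp_neg_mul_sq (by norm_num : (0:ℝ) < 1/2)).const_mul c

lemma integrableOn_xexp (s : Set ℝ) :
    MeasureTheory.IntegrableOn (fun x : ℝ => x * Real.exp (-(x ^ 2) / 2)) s := by
  have h : (fun x : ℝ => x * Real.exp (-(x ^ 2) / 2))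
      = fun x : ℝ => x * Real.exp (-(1/2 : ℝ) * x ^ 2) := by
    funext x; ring_nf
  rw [h]
  exact (integrable_mul_exp_neg_mul_sq (by norm_num : (0:ℝ) < 1/2)).integrableOn

lemma integral_f : ∫ x, f x = 1 := by
  rw [f_eq, MeasureTheory.integral_const_mul, integral_gaussian]
  have h2 : π / (1/2 : ℝ) = 2 * π := by ring
  rw [h2]
  exact inv_mul_cancel₀ (ne_of_gt (Real.sqrt_pos.2 (by positivity)))

noncomputable def T (t : ℝ) : ℝ := ∫ x in Set.Ioi t, f x

lemma one_sub_cdf (t : ℝ) : 1 - stdNormalCDF t = T t := by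
  have h := intervalIntegral.integral_Iic_add_Ioi (μ := volume) (b := t)
    integrable_f.integrableOn integrable_f.integrableOn
  rw [integral_f] at h
  have h2 : stdNormalCDF t = ∫ x in Set.Iic t, f x := rfl
  rw [h2]
  unfold T
  linarith [h]

lemma T_pos (t : ℝ) : 0 < T t := by
  rw [T, MeasureTheory.setIntegral_pos_iff_support_of_nonneg_ae
    (Filter.Eventually.of_forall fun x => (f_pos x).le) integrable_f.integrableOn]
  have hs : Function.support f = Set.univ := by
    ext x; simp [Function.support, (f_pos x).ne']
  rw [hs, Set.univ_inter]
  simp [Real.volume_Ioi]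

lemma integral_xexp (t : ℝ) :
    ∫ x in Set.Ioi t, x * Real.exp (-(x ^ 2) / 2) = Real.exp (-(t ^ 2) / 2) := by
  have hderiv : ∀ x ∈ Set.Ioi t,
      HasDerivAt (fun x : ℝ => -Real.exp (-(x ^ 2) / 2))
        (x * Real.exp (-(x ^ 2) / 2)) x := by
    intro x _
    have h1 : HasDerivAt (fun x : ℝ => -(x ^ 2) / 2) (-x) x := by
      have h := ((hasDerivAt_pow 2 x).neg).div_const 2
      refine h.congr_deriv ?_
      push_cast; ring
    have h2 := (h1.exp).neg
    refine h2.congr_deriv ?_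
    ring
  have htend : Tendsto (fun x : ℝ => -Real.exp (-(x ^ 2) / 2)) atTop (nhds 0) := by
    rw [← neg_zero]
    apply Tendsto.neg
    apply Real.tendsto_exp_atBot.comp
    have hg : Tendsto (fun x : ℝ => 1/2 + -x) atTop atBot :=
      tendsto_atBot_add_const_left atTop (1/2) tendsto_neg_atTop_atBot
    apply Filter.tendsto_atBot_mono (fun x : ℝ => ?_) hg
    nlinarith [sq_nonneg (x - 1)]
  have h := MeasureTheory.integral_Ioi_of_hasDerivAt_of_tendsto
    (f := fun x : ℝ => -Real.exp (-(x ^ 2) / 2))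
    (f' := fun x : ℝ => x * Real.exp (-(x ^ 2) / 2))
    (Continuous.continuousWithinAt (by continuity)) hderiv (integrableOn_xexp _) htend
  rw [h]; ring

lemma T_le (t : ℝ) (ht : 1 ≤ t) : T t ≤ c * Real.exp (-(t ^ 2) / 2) := by
  have hmono : T t ≤ ∫ x in Set.Ioi t, c * (x * Real.exp (-(x ^ 2) / 2)) := by
    apply MeasureTheory.setIntegral_mono_on integrable_f.integrableOn
      ((integrableOn_xexp _).const_mul c) measurableSet_Ioi
    intro x hx
    have hx1 : 1 ≤ x := le_trans ht (le_of_lt hx)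
    unfold f
    exact mul_le_mul_of_nonneg_left
      (le_mul_of_one_le_left (Real.exp_pos _).le hx1) c_pos.le
  calc T t ≤ ∫ x in Set.Ioi t, c * (x * Real.exp (-(x ^ 2) / 2)) := hmono
    _ = c * Real.exp (-(t ^ 2) / 2) := by
        rw [MeasureTheory.integral_const_mul, integral_xexp]

lemma T_ge (μ t : ℝ) (hμ : 0 < μ) (ht : μ ≤ t) :
    μ / 2 * (c * Real.exp (-((t - μ / 2) ^ 2) / 2)) ≤ T (t - μ) := by
  have hsub : Set.Ioc (t - μ) (t - μ / 2) ⊆ Set.Ioi (t - μ) := Set.Ioc_subset_Ioi_self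
  have h1 : ∫ x in Set.Ioc (t - μ) (t - μ / 2), f x ≤ T (t - μ) :=
    MeasureTheory.setIntegral_mono_set integrable_f.integrableOn
      (Filter.Eventually.of_forall fun x => (f_pos x).le) hsub.eventuallyLE
  refine le_trans ?_ h1
  have h2 : μ / 2 * (c * Real.exp (-((t - μ / 2) ^ 2) / 2))
      = ∫ _ in Set.Ioc (t - μ) (t - μ / 2), c * Real.exp (-((t - μ / 2) ^ 2) / 2) := by
    rw [MeasureTheory.setIntegral_const, Real.volume_real_Ioc, smul_eq_mul]
    congr 1
    rw [max_eq_left (by linarith)]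
    ring
  rw [h2]
  apply MeasureTheory.setIntegral_mono_on
    (MeasureTheory.integrableOn_const measure_Ioc_lt_top.ne)
    integrable_f.integrableOn measurableSet_Ioc
  intro x hx
  unfold f
  have hxnn : 0 ≤ x := by linarith [hx.1]
  have hxle : x ≤ t - μ / 2 := hx.2
  have hsq : x ^ 2 ≤ (t - μ / 2) ^ 2 := by nlinarith
  exact mul_le_mul_of_nonneg_left
    (Real.exp_le_exp.2 (by linarith)) c_pos.le

end GaussTailAux

open GaussTailAux

/-- for the standard normal CDF Φ and any μ > 0, the tail ratio
Φ̄(t-μ)/Φ̄(t) tends to infinity as t → ∞. -/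
theorem gaussian_tail_ratio_tendsto_atTop
    (μ : ℝ) (hμ : 0 < μ) :
    Tendsto (fun t : ℝ => (1 - stdNormalCDF (t - μ)) / (1 - stdNormalCDF t))
      atTop atTop := by
  have hLB : Tendsto (fun t : ℝ => μ / 2 * Real.exp (μ * t / 2 - μ ^ 2 / 8))
      atTop atTop := by
    apply Tendsto.const_mul_atTop (by positivity : (0:ℝ) < μ / 2)
    apply Real.tendsto_exp_atTop.comp
    have h0 : Tendsto (fun t : ℝ => μ * t / 2) atTop atTop :=
      (tendsto_id.const_mul_atTop hμ).atTop_div_const (by norm_num)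
    simpa [sub_eq_add_neg] using tendsto_atTop_add_const_right atTop (-(μ ^ 2 / 8)) h0
  apply tendsto_atTop_mono' _ _ hLB
  filter_upwards [Filter.eventually_ge_atTop (max 1 μ)] with t ht
  have ht1 : (1:ℝ) ≤ t := le_trans (le_max_left _ _) ht
  have htμ : μ ≤ t := le_trans (le_max_right _ _) ht
  rw [one_sub_cdf, one_sub_cdf]
  have hkey : μ / 2 * (c * Real.exp (-((t - μ / 2) ^ 2) / 2))
      / (c * Real.exp (-(t ^ 2) / 2)) ≤ T (t - μ) / T t :=
    div_le_div₀ (T_pos _).le (T_ge μ t hμ htμ) (T_pos t) (T_le t ht1)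
  have heq : μ / 2 * (c * Real.exp (-((t - μ / 2) ^ 2) / 2))
      / (c * Real.exp (-(t ^ 2) / 2)) = μ / 2 * Real.exp (μ * t / 2 - μ ^ 2 / 8) := by
    rw [show μ * t / 2 - μ ^ 2 / 8 = (-((t - μ / 2) ^ 2) / 2) - (-(t ^ 2) / 2) by ring,
      Real.exp_sub]
    have hc := c_pos.ne'
    have he := (Real.exp_pos (-(t ^ 2) / 2)).ne'
    field_simp
  calc μ / 2 * Real.exp (μ * t / 2 - μ ^ 2 / 8)
      = μ / 2 * (c * Real.exp (-((t - μ / 2) ^ 2) / 2)) / (c * Real.exp (-(t ^ 2) / 2)) :=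
        heq.symm
    _ ≤ T (t - μ) / T t := hkey
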